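/- In a graded connected commutative Hopf algebra H, the identity map on the augmentation ideal equals the sum over j ≥ 1 of the convolution powers σ^{⋆j} of σ = S ⋆ P, where the sum terminates on any element of finite degree: for every x in the augmentation ideal, x = Σ_{j=1}^∞ σ^{⋆j}(x) with only finitely many nonzero terms. -/

import Mathlib

open TensorProduct

variable (K : Type*) [Field K] [CharZero K]
variable (H : Type*) [CommRing H] [HopfAlgebra K H]

/-- The reduced coproduct `Δ' = Δ - 1⊗id - id⊗1`. -/
noncomputable def redComul : H →ₗ[K] H ⊗[K] H :=
  Coalgebra.comul - TensorProduct.mk K H H 1 - (TensorProduct.mk K H H).flip 1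

/-- `H ⊗ (⨂ⁿ H) ≃ ⨂ⁿ⁺¹ H`. -/
noncomputable def tpowSuccEquiv (n : ℕ) :
    (H ⊗[K] (⨂[K]^n H)) ≃ₗ[K] ⨂[K]^(n+1) H :=
  (TensorProduct.congr
      ((PiTensorProduct.subsingletonEquiv (0 : Fin 1)).symm) (LinearEquiv.refl K _)).trans
  ((PiTensorProduct.tmulEquiv K H).trans
    (PiTensorProduct.reindex K (fun _ => H) ((finSumFinEquiv).trans (finCongr (by omega)))))

/-- The iterated reduced coproduct: `DIter 0 = id` (as a map `H → ⨂¹H`) and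
`DIter (n+1) = (id ⊗ DIter n) ∘ Δ'`, so that for `n ≥ 1`, `DIter n = Δ^(n)`. -/
noncomputable def DIter : (n : ℕ) → (H →ₗ[K] ⨂[K]^(n+1) H)
  | 0 => ((PiTensorProduct.subsingletonEquiv (s := fun _ => H) (0 : Fin 1)).symm : H ≃ₗ[K] ⨂[K]^1 H).toLinearMap
  | n+1 => (tpowSuccEquiv K H (n+1)).toLinearMap ∘ₗ
      (LinearMap.lTensor H (DIter n)) ∘ₗ redComul K H

/-- Convolution product of linear endomorphisms of a Hopf algebra. -/
noncomputable def conv (f g : H →ₗ[K] H) : H →ₗ[K] H :=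
  LinearMap.mul' K H ∘ₗ TensorProduct.map f g ∘ₗ Coalgebra.comul

/-- Projection onto the augmentation ideal, `P = id - η ∘ ε`. -/
noncomputable def augProj : H →ₗ[K] H :=
  LinearMap.id - (Algebra.linearMap K H ∘ₗ Coalgebra.counit)

/-- `σ = S ⋆ P`. -/
noncomputable def sigmaMap : H →ₗ[K] H :=
  conv K H (HopfAlgebra.antipode (R := K)) (augProj K H)

/-- Convolution powers `σ^{⋆ j}`, with `σ^{⋆0} = η ∘ ε` the convolution unit. -/
noncomputable def sigmaPow : ℕ → (H →ₗ[K] H)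
  | 0 => Algebra.linearMap K H ∘ₗ Coalgebra.counit
  | j+1 => conv K H (sigmaMap K H) (sigmaPow j)

lemma conv_repr (f g : H →ₗ[K] H) (x : H) (r : Coalgebra.Repr K x (H × H)) :
    conv K H f g x = ∑ i ∈ r.index, f (r.left i) * g (r.right i) := by
  simp [conv, ← r.eq, map_sum]

lemma conv_unit_right (f : H →ₗ[K] H) :
    conv K H f (Algebra.linearMap K H ∘ₗ Coalgebra.counit) = f := by
  apply LinearMap.ext; intro x
  have hm : TensorProduct.map f (Algebra.linearMap K H ∘ₗ (Coalgebra.counit : H →ₗ[K] K))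
      = (TensorProduct.map f (Algebra.linearMap K H) : H ⊗[K] K →ₗ[K] H ⊗[K] H) ∘ₗ
        (TensorProduct.map (LinearMap.id : H →ₗ[K] H) (Coalgebra.counit (R := K) (A := H))) := by
    have := TensorProduct.map_comp f (Algebra.linearMap K H)
      (LinearMap.id : H →ₗ[K] H) (Coalgebra.counit (R := K) (A := H))
    rwa [LinearMap.comp_id] at this
  have h2 : (TensorProduct.map (LinearMap.id : H →ₗ[K] H) (Coalgebra.counit (R := K) (A := H)))
      (Coalgebra.comul x) = x ⊗ₜ[K] 1 := Coalgebra.lTensor_counit_comul x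
  simp [conv, hm, h2]

lemma conv_unit_left (f : H →ₗ[K] H) :
    conv K H (Algebra.linearMap K H ∘ₗ Coalgebra.counit) f = f := by
  apply LinearMap.ext; intro x
  have hm : TensorProduct.map (Algebra.linearMap K H ∘ₗ (Coalgebra.counit : H →ₗ[K] K)) f
      = (TensorProduct.map (Algebra.linearMap K H) f : K ⊗[K] H →ₗ[K] H ⊗[K] H) ∘ₗ
        (TensorProduct.map (Coalgebra.counit (R := K) (A := H)) (LinearMap.id : H →ₗ[K] H)) := by
    have := TensorProduct.map_comp (Algebra.linearMap K H) f
      (Coalgebra.counit (R := K) (A := H)) (LinearMap.id : H →ₗ[K] H)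
    rwa [LinearMap.comp_id] at this
  have h2 : (TensorProduct.map (Coalgebra.counit (R := K) (A := H)) (LinearMap.id : H →ₗ[K] H))
      (Coalgebra.comul x) = (1 : K) ⊗ₜ[K] x := Coalgebra.rTensor_counit_comul x
  simp [conv, hm, h2]

lemma conv_antipode_id :
    conv K H (HopfAlgebra.antipode (R := K)) LinearMap.id
      = Algebra.linearMap K H ∘ₗ Coalgebra.counit := by
  rw [conv]
  rw [show TensorProduct.map (HopfAlgebra.antipode (R := K) (A := H)) LinearMap.id
      = LinearMap.rTensor H (HopfAlgebra.antipode (R := K)) from rfl]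
  exact HopfAlgebra.mul_antipode_rTensor_comul

lemma conv_id_antipode :
    conv K H LinearMap.id (HopfAlgebra.antipode (R := K))
      = Algebra.linearMap K H ∘ₗ Coalgebra.counit := by
  rw [conv]
  rw [show TensorProduct.map LinearMap.id (HopfAlgebra.antipode (R := K) (A := H))
      = LinearMap.lTensor H (HopfAlgebra.antipode (R := K)) from rfl]
  exact HopfAlgebra.mul_antipode_lTensor_comul

lemma map_sub_right (f g h : H →ₗ[K] H) :
    TensorProduct.map f (g - h) = TensorProduct.map f g - TensorProduct.map f h := by
  apply TensorProduct.ext'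
  intro a b
  simp [TensorProduct.tmul_sub]

lemma conv_sub_right (f g h : H →ₗ[K] H) :
    conv K H f (g - h) = conv K H f g - conv K H f h := by
  apply LinearMap.ext; intro x
  simp [conv, map_sub_right]

lemma map_sub_left (f g h : H →ₗ[K] H) :
    TensorProduct.map (f - g) h = TensorProduct.map f h - TensorProduct.map g h := by
  apply TensorProduct.ext'
  intro a b
  simp [TensorProduct.sub_tmul]

lemma conv_sub_left (f g h : H →ₗ[K] H) :
    conv K H (f - g) h = conv K H f h - conv K H g h := by
  apply LinearMap.ext; intro x
  simp [conv, map_sub_left]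

lemma conv_repr' (f g : H →ₗ[K] H) (x : H) (r : Coalgebra.Repr K x (H × H)) :
    conv K H f g x = ∑ i ∈ r.index, f (r.left i) * g (r.right i) :=
  conv_repr K H f g x r

lemma conv_assoc (f g h : H →ₗ[K] H) :
    conv K H (conv K H f g) h = conv K H f (conv K H g h) := by
  apply LinearMap.ext; intro x
  set r := Coalgebra.Repr.arbitrary K x with hr
  set a₁ : (i : r.ι) → Coalgebra.Repr K (r.left i) (H × H) :=
    fun i => Coalgebra.Repr.arbitrary K (r.left i) with ha₁
  set a₂ : (i : r.ι) → Coalgebra.Repr K (r.right i) (H × H) :=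
    fun i => Coalgebra.Repr.arbitrary K (r.right i) with ha₂
  have key := Coalgebra.sum_map_tmul_tmul_eq (R := K) (A := H) (B := H)
    f g h x (repr := r) (a₁ := a₁) (a₂ := a₂)
  apply_fun (LinearMap.mul' K H ∘ₗ LinearMap.lTensor H (LinearMap.mul' K H)) at key
  simp only [map_sum, LinearMap.coe_comp, Function.comp_apply, LinearMap.lTensor_tmul,
    LinearMap.mul'_apply] at key
  calc conv K H (conv K H f g) h x
      = ∑ i ∈ r.index, (conv K H f g) (r.left i) * h (r.right i) :=
        conv_repr K H _ h x r
    _ = ∑ i ∈ r.index, ∑ j ∈ (a₁ i).index,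
          f ((a₁ i).left j) * (g ((a₁ i).right j) * h (r.right i)) := by
        refine Finset.sum_congr rfl fun i _ => ?_
        rw [conv_repr K H f g _ (a₁ i), Finset.sum_mul]
        exact Finset.sum_congr rfl fun j _ => mul_assoc _ _ _
    _ = ∑ i ∈ r.index, ∑ j ∈ (a₂ i).index,
          f (r.left i) * (g ((a₂ i).left j) * h ((a₂ i).right j)) := key.symm
    _ = ∑ i ∈ r.index, f (r.left i) * conv K H g h (r.right i) := by
        refine Finset.sum_congr rfl fun i _ => ?_
        rw [conv_repr K H g h _ (a₂ i), Finset.mul_sum]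
    _ = conv K H f (conv K H g h) x := (conv_repr K H f _ x r).symm

lemma sigma_eq : sigmaMap K H =
    (Algebra.linearMap K H ∘ₗ Coalgebra.counit) - HopfAlgebra.antipode (R := K) := by
  rw [sigmaMap, augProj, conv_sub_right, conv_antipode_id, conv_unit_right]

lemma conv_id_sigma : conv K H LinearMap.id (sigmaMap K H)
    = LinearMap.id - (Algebra.linearMap K H ∘ₗ Coalgebra.counit) := by
  rw [sigma_eq, conv_sub_right, conv_id_antipode, conv_unit_right]

lemma telescope (N : ℕ) :
    ∑ j ∈ Finset.range N, sigmaPow K H j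
      = LinearMap.id - conv K H LinearMap.id (sigmaPow K H N) := by
  induction N with
  | zero => rw [Finset.range_zero, Finset.sum_empty, show sigmaPow K H 0
      = Algebra.linearMap K H ∘ₗ Coalgebra.counit from rfl, conv_unit_right, sub_self]
  | succ N ih =>
      rw [Finset.sum_range_succ, ih]
      have h1 : conv K H LinearMap.id (sigmaPow K H (N+1))
          = conv K H LinearMap.id (sigmaPow K H N) - sigmaPow K H N := by
        rw [show sigmaPow K H (N+1) = conv K H (sigmaMap K H) (sigmaPow K H N) from rfl,
          ← conv_assoc, conv_id_sigma, conv_sub_left, conv_unit_left]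
      rw [h1]
      abel

variable (𝒜 : ℕ → Submodule K H)


/-- The coproduct is compatible with the grading:
`Δ(𝒜 n) ⊆ Σ_{p+q=n} 𝒜 p ⊗ 𝒜 q`. -/
def ComulGraded : Prop :=
  ∀ n : ℕ, ∀ x ∈ 𝒜 n,
    Coalgebra.comul (R := K) x ∈
      ⨆ pq : {pq : ℕ × ℕ // pq.1 + pq.2 = n},
        LinearMap.range (TensorProduct.map (𝒜 pq.1.1).subtype (𝒜 pq.1.2).subtype)

lemma conv_vanish (f g : H →ₗ[K] H) (n : ℕ)
    (hfg : ∀ p q : ℕ, p + q = n → (∀ y ∈ 𝒜 p, f y = 0) ∨ (∀ y ∈ 𝒜 q, g y = 0))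
    (hgr : ComulGraded K H 𝒜) (x : H) (hx : x ∈ 𝒜 n) : conv K H f g x = 0 := by
  have hmem := hgr n x hx
  have hker : (⨆ pq : {pq : ℕ × ℕ // pq.1 + pq.2 = n},
        LinearMap.range (TensorProduct.map (𝒜 pq.1.1).subtype (𝒜 pq.1.2).subtype))
      ≤ LinearMap.ker (LinearMap.mul' K H ∘ₗ TensorProduct.map f g) := by
    apply iSup_le
    rintro ⟨⟨p, q⟩, hpq⟩
    rw [LinearMap.range_le_ker_iff, LinearMap.comp_assoc, ← TensorProduct.map_comp]
    rcases hfg p q hpq with hf | hg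
    · have h0 : f ∘ₗ (𝒜 p).subtype = 0 := by
        ext y; exact hf y y.2
      have hz : TensorProduct.map (f ∘ₗ (𝒜 p).subtype) (g ∘ₗ (𝒜 q).subtype) = 0 := by
        rw [h0]; apply TensorProduct.ext'; intro a b
        simp [TensorProduct.zero_tmul]
      rw [hz, LinearMap.comp_zero]
    · have h0 : g ∘ₗ (𝒜 q).subtype = 0 := by
        ext y; exact hg y y.2
      have hz : TensorProduct.map (f ∘ₗ (𝒜 p).subtype) (g ∘ₗ (𝒜 q).subtype) = 0 := by
        rw [h0]; apply TensorProduct.ext'; intro a b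
        simp [TensorProduct.tmul_zero]
      rw [hz, LinearMap.comp_zero]
  have hmem2 := hker hmem
  rw [LinearMap.mem_ker] at hmem2
  simpa [conv] using hmem2

lemma sigmaMap_zero_deg0 (hconn : 𝒜 0 = 1) : ∀ x ∈ 𝒜 0, sigmaMap K H x = 0 := by
  intro x hx
  rw [hconn, Submodule.one_eq_range] at hx
  obtain ⟨c, rfl⟩ := hx
  have hS1 : HopfAlgebra.antipode (R := K) (1 : H) = 1 := by
    have h := HopfAlgebra.mul_antipode_rTensor_comul_apply (R := K) (1 : H)
    simpa [Algebra.TensorProduct.one_def] using h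
  have hS : HopfAlgebra.antipode (R := K) (Algebra.linearMap K H c)
      = Algebra.linearMap K H c := by
    have : (Algebra.linearMap K H c : H) = c • (1 : H) := by
      simp [Algebra.algebraMap_eq_smul_one]
    rw [this, map_smul, hS1]
  rw [sigma_eq]
  simp only [LinearMap.sub_apply, LinearMap.comp_apply, hS]
  simp [Algebra.algebraMap_eq_smul_one]

lemma sigmaPow_vanish (hconn : 𝒜 0 = 1) (hgr : ComulGraded K H 𝒜) :
    ∀ j n, n ≤ j → ∀ x ∈ 𝒜 n, sigmaPow K H (j+1) x = 0 := by
  intro j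
  induction j with
  | zero =>
      intro n hn x hx
      obtain rfl : n = 0 := Nat.le_zero.mp hn
      rw [show sigmaPow K H 1 = conv K H (sigmaMap K H)
          (Algebra.linearMap K H ∘ₗ Coalgebra.counit) from rfl, conv_unit_right]
      exact sigmaMap_zero_deg0 K H 𝒜 hconn x hx
  | succ j ih =>
      intro n hn x hx
      rw [show sigmaPow K H (j+2) = conv K H (sigmaMap K H) (sigmaPow K H (j+1)) from rfl]
      refine conv_vanish K H 𝒜 _ _ n ?_ hgr x hx
      intro p q hpq
      by_cases hp : p = 0
      · subst hp; exact Or.inl (sigmaMap_zero_deg0 K H 𝒜 hconn)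
      · exact Or.inr (fun y hy => ih q (by omega) y hy)

lemma conv_id_pow_vanish (hconn : 𝒜 0 = 1) (hgr : ComulGraded K H 𝒜)
    (N n : ℕ) (hn : n < N) (x : H) (hx : x ∈ 𝒜 n) :
    conv K H LinearMap.id (sigmaPow K H N) x = 0 := by
  obtain ⟨M, rfl⟩ : ∃ M, N = M + 1 := ⟨N - 1, by omega⟩
  refine conv_vanish K H 𝒜 _ _ n ?_ hgr x hx
  intro p q hpq
  exact Or.inr (fun y hy => sigmaPow_vanish K H 𝒜 hconn hgr M q (by omega) y hy)

/-- In a graded connected commutative Hopf algebra, the identity map on the augmentation ideal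
equals the sum over `j ≥ 1` of the convolution powers `σ^{⋆j}` of `σ = S ⋆ P`: for every
`x` in the augmentation ideal, `x = Σ_{j=1}^∞ σ^{⋆j}(x)`, the sum terminating (all terms
with `j ≥ N` vanish for some `N`). -/
theorem augmentation_ideal_eq_sum_sigmaPow
    [GradedAlgebra 𝒜] (hconn : 𝒜 0 = 1) (hgr : ComulGraded K H 𝒜)
    (x : H) (hx : Coalgebra.counit (R := K) x = 0) :
    ∃ N : ℕ, (∀ j, N ≤ j → sigmaPow K H j x = 0) ∧
      x = ∑ j ∈ Finset.Ico 1 N, sigmaPow K H j x := by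
  classical
  set s := (DirectSum.decompose 𝒜 x).support with hs
  set N := s.sup id + 1 with hN
  have hcomp : ∀ n, ((DirectSum.decompose 𝒜 x) n : H) ∈ 𝒜 n := fun n => SetLike.coe_mem _
  have hsum : ∑ n ∈ s, ((DirectSum.decompose 𝒜 x) n : H) = x :=
    DirectSum.sum_support_decompose 𝒜 x
  have hdeg : ∀ n ∈ s, n < N := fun n hn =>
    lt_of_le_of_lt (Finset.le_sup (f := id) hn) (Nat.lt_succ_self _)
  refine ⟨N, ?_, ?_⟩
  · intro j hj
    obtain ⟨m, rfl⟩ : ∃ m, j = m + 1 := ⟨j - 1, by omega⟩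
    rw [← hsum, map_sum]
    refine Finset.sum_eq_zero fun n hn => ?_
    exact sigmaPow_vanish K H 𝒜 hconn hgr m n (by have := hdeg n hn; omega) _ (hcomp n)
  · have ht := LinearMap.congr_fun (telescope K H N) x
    simp only [LinearMap.sum_apply, LinearMap.sub_apply, LinearMap.id_apply] at ht
    have hz : conv K H LinearMap.id (sigmaPow K H N) x = 0 := by
      rw [← hsum, map_sum]
      refine Finset.sum_eq_zero fun n hn => ?_
      exact conv_id_pow_vanish K H 𝒜 hconn hgr N n (hdeg n hn) _ (hcomp n)
    rw [hz, sub_zero] at ht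
    have h0 : sigmaPow K H 0 x = 0 := by
      rw [show sigmaPow K H 0 = Algebra.linearMap K H ∘ₗ Coalgebra.counit from rfl]
      simp [hx]
    have hsplit : ∑ j ∈ Finset.range N, sigmaPow K H j x
        = sigmaPow K H 0 x + ∑ j ∈ Finset.Ico 1 N, sigmaPow K H j x := by
      rw [Finset.range_eq_Ico, Finset.sum_eq_sum_Ico_succ_bot (by omega : 0 < N)]
    rw [hsplit, h0, zero_add] at ht
    exact ht.symm
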